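/- Suppose the equality-constrained problem min Σᵢ₌₁^N fᵢ(xᵢ) s.t. Wx = b (fᵢ convex differentiable on ℝ^{nᵢ}) and the inequality-constrained problem adding x̲ᵢₗ ≤ xᵢₗ ≤ x̄ᵢₗ have KKT multipliers μ̲*, μ̄* all bounded by γ* at some solution. Then for γ > γ*, any minimizer of the exact-penalty problem min f(x) + γ Σᵢ (Σₗ max(0, x̲ᵢₗ − xᵢₗ) + Σₗ max(0, xᵢₗ − x̄ᵢₗ)) subject to Wx = b is also a minimizer of the original inequality-constrained problem. -/
import Mathlib

open Finset in
lemma grad_ineq_aux (m : ℕ) (f : (Fin m → ℝ) → ℝ) (hconv : ConvexOn ℝ Set.univ f)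
    (g : (Fin m → ℝ) → Fin m → ℝ)
    (hgrad : ∀ (x v : Fin m → ℝ),
      HasDerivAt (fun t : ℝ => f (x + t • v)) (∑ i, g x i * v i) 0)
    (xs x : Fin m → ℝ) :
    f xs + ∑ i, g xs i * (x i - xs i) ≤ f x := by
  set v : Fin m → ℝ := x - xs with hv
  have hφ : ConvexOn ℝ Set.univ (fun t : ℝ => f (xs + t • v)) := by
    have h := hconv.comp_affineMap (AffineMap.lineMap (xs : Fin m → ℝ) (xs + v))
    have : (f ∘ ⇑(AffineMap.lineMap (xs : Fin m → ℝ) (xs + v))) =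
        fun t : ℝ => f (xs + t • v) := by
      funext t
      simp [AffineMap.lineMap_apply, add_sub_cancel_left, add_comm]
    rw [this] at h
    simpa using h
  have hd := hgrad xs v
  have hslope := hφ.le_slope_of_hasDerivWithinAt_Ioi (Set.mem_univ (0:ℝ))
    (Set.mem_univ (1:ℝ)) one_pos (hd.hasDerivWithinAt)
  have h2 : (∑ i, g xs i * v i) ≤ f (xs + v) - f xs := by
    simpa [slope_def_field] using hslope
  have hxv : xs + v = x := by simp [hv]
  rw [hxv] at h2
  simp only [hv, Pi.sub_apply] at h2
  linarith

/-- Exact penalty theorem. If the convex problem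
min f(x) s.t. Wx = b, lo ≤ x ≤ hi has a KKT point whose box-constraint
multipliers are all bounded by γ*, then for any γ > γ*, every minimizer of the
exact-penalty problem min f(x) + γ Σᵢ (max(0, loᵢ − xᵢ) + max(0, xᵢ − hiᵢ))
subject to Wx = b is also a minimizer of the original problem. -/
theorem exact_penalty (m p : ℕ)
    (f : (Fin m → ℝ) → ℝ) (hconv : ConvexOn ℝ Set.univ f)
    (hdiff : Differentiable ℝ f)
    (g : (Fin m → ℝ) → Fin m → ℝ)
    (hgrad : ∀ (x v : Fin m → ℝ),
      HasDerivAt (fun t : ℝ => f (x + t • v)) (∑ i, g x i * v i) 0)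
    (W : Matrix (Fin p) (Fin m) ℝ) (b : Fin p → ℝ) (lo hi : Fin m → ℝ)
    (xs : Fin m → ℝ) (ν : Fin p → ℝ) (μlo μhi : Fin m → ℝ) (γstar : ℝ)
    (hstat : ∀ i, g xs i + W.transpose.mulVec ν i - μlo i + μhi i = 0)
    (heq : W.mulVec xs = b)
    (hbox : ∀ i, lo i ≤ xs i ∧ xs i ≤ hi i)
    (hcs : ∀ i, μlo i * (lo i - xs i) = 0 ∧ μhi i * (xs i - hi i) = 0)
    (hμ : ∀ i, 0 ≤ μlo i ∧ 0 ≤ μhi i)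
    (hbound : ∀ i, μlo i ≤ γstar ∧ μhi i ≤ γstar)
    (hmin : IsMinOn f {x | W.mulVec x = b ∧ ∀ i, lo i ≤ x i ∧ x i ≤ hi i} xs)
    (γ : ℝ) (hγ : γstar < γ)
    (xp : Fin m → ℝ) (hxp : W.mulVec xp = b)
    (hxpmin : IsMinOn
      (fun x => f x + γ * ∑ i, (max 0 (lo i - x i) + max 0 (x i - hi i)))
      {x | W.mulVec x = b} xp) :
    (∀ i, lo i ≤ xp i ∧ xp i ≤ hi i) ∧
      IsMinOn f {x | W.mulVec x = b ∧ ∀ i, lo i ≤ x i ∧ x i ≤ hi i} xp := by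
  set pen : (Fin m → ℝ) → ℝ :=
    fun x => ∑ i, (max 0 (lo i - x i) + max 0 (x i - hi i)) with hpen
  have hpen_nonneg : ∀ x, 0 ≤ pen x := by
    intro x
    apply Finset.sum_nonneg
    intro i _
    positivity
  -- Key inequality
  have key : ∀ x : Fin m → ℝ, W.mulVec x = b → f xs ≤ f x + γstar * pen x := by
    intro x hx
    have hgi := grad_ineq_aux m f hconv g hgrad xs x
    -- the W^T ν part sums to zero
    have hWsum : ∑ i, W.transpose.mulVec ν i * (x i - xs i) = 0 := by
      have hz : ∀ j, ∑ i, W j i * (x i - xs i) = 0 := by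
        intro j
        have h1 := congrFun hx j
        have h2 := congrFun heq j
        simp only [Matrix.mulVec, dotProduct] at h1 h2
        simp [mul_sub, Finset.sum_sub_distrib, h1, h2]
      simp only [Matrix.mulVec, Matrix.transpose_apply, dotProduct]
      calc ∑ i, (∑ j, W j i * ν j) * (x i - xs i)
          = ∑ i, ∑ j, W j i * ν j * (x i - xs i) := by
            simp [Finset.sum_mul]
        _ = ∑ j, ∑ i, W j i * ν j * (x i - xs i) := Finset.sum_comm
        _ = ∑ j, ν j * ∑ i, W j i * (x i - xs i) := by
            refine Finset.sum_congr rfl fun j _ => ?_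
            rw [Finset.mul_sum]
            refine Finset.sum_congr rfl fun i _ => by ring
        _ = 0 := by simp [hz]
    -- per-coordinate multiplier bound
    have hterm : ∀ i, -(γstar * (max 0 (lo i - x i) + max 0 (x i - hi i))) ≤
        (μlo i - μhi i) * (x i - xs i) := by
      intro i
      obtain ⟨hl0, hh0⟩ := hμ i
      obtain ⟨hlb, hhb⟩ := hbound i
      obtain ⟨hcl, hch⟩ := hcs i
      have hg0 : 0 ≤ γstar := le_trans hl0 hlb
      have h1 : -(γstar * max 0 (lo i - x i)) ≤ μlo i * (x i - xs i) := by
        have e : μlo i * (x i - xs i) = μlo i * (x i - lo i) := by nlinarith [hcl]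
        rw [e]
        have hmax : lo i - x i ≤ max 0 (lo i - x i) := le_max_right _ _
        have hmax0 : 0 ≤ max 0 (lo i - x i) := le_max_left _ _
        nlinarith
      have h2 : -(γstar * max 0 (x i - hi i)) ≤ -(μhi i * (x i - xs i)) := by
        have e : μhi i * (x i - xs i) = μhi i * (x i - hi i) := by nlinarith [hch]
        rw [e]
        have hmax : x i - hi i ≤ max 0 (x i - hi i) := le_max_right _ _
        have hmax0 : 0 ≤ max 0 (x i - hi i) := le_max_left _ _
        nlinarith
      nlinarith [h1, h2]
    have hsum : -(γstar * pen x) ≤ ∑ i, (μlo i - μhi i) * (x i - xs i) := by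
      have h := Finset.sum_le_sum (fun i (_ : i ∈ Finset.univ) => hterm i)
      rw [Finset.sum_neg_distrib, ← Finset.mul_sum] at h
      simpa [hpen] using h
    have hgs : ∀ i, g xs i = -(W.transpose.mulVec ν i) + μlo i - μhi i := by
      intro i; linarith [hstat i]
    have hrw : ∑ i, g xs i * (x i - xs i) =
        -(∑ i, W.transpose.mulVec ν i * (x i - xs i)) +
          ∑ i, (μlo i - μhi i) * (x i - xs i) := by
      rw [← Finset.sum_neg_distrib, ← Finset.sum_add_distrib]
      refine Finset.sum_congr rfl fun i _ => ?_
      rw [hgs i]; ring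
    rw [hrw, hWsum] at hgi
    linarith
  -- penalty at xs is zero
  have hpxs : pen xs = 0 := by
    have hz : ∀ i ∈ Finset.univ, max 0 (lo i - xs i) + max 0 (xs i - hi i) = (0:ℝ) := by
      intro i _
      obtain ⟨h1, h2⟩ := hbox i
      rw [max_eq_left (by linarith), max_eq_left (by linarith)]; ring
    simp only [hpen]
    exact Finset.sum_eq_zero hz
  -- P xp ≤ f xs
  have hPle : f xp + γ * pen xp ≤ f xs := by
    have := hxpmin (by exact heq : xs ∈ {x | W.mulVec x = b})
    simp only [Set.mem_setOf_eq] at this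
    calc f xp + γ * pen xp ≤ f xs + γ * pen xs := this
      _ = f xs := by rw [hpxs]; ring
  have hkey := key xp hxp
  have hpxp : pen xp = 0 := by
    have h1 : (γ - γstar) * pen xp ≤ 0 := by linarith
    have h2 := hpen_nonneg xp
    nlinarith
  have hfeas : ∀ i, lo i ≤ xp i ∧ xp i ≤ hi i := by
    intro i
    have hz : max 0 (lo i - xp i) + max 0 (xp i - hi i) = 0 := by
      have := Finset.sum_eq_zero_iff_of_nonneg
        (fun i _ => by positivity :
          ∀ i ∈ Finset.univ, (0:ℝ) ≤ max 0 (lo i - xp i) + max 0 (xp i - hi i))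
      rw [hpen] at hpxp
      exact (this.mp hpxp) i (Finset.mem_univ i)
    have ha : (0:ℝ) ≤ max 0 (lo i - xp i) := le_max_left _ _
    have hb : (0:ℝ) ≤ max 0 (xp i - hi i) := le_max_left _ _
    have ha' : max 0 (lo i - xp i) = 0 := by linarith
    have hb' : max 0 (xp i - hi i) = 0 := by linarith
    constructor
    · by_contra h
      push_neg at h
      have := le_max_right (0:ℝ) (lo i - xp i)
      linarith
    · by_contra h
      push_neg at h
      have := le_max_right (0:ℝ) (xp i - hi i)
      linarith
  refine ⟨hfeas, ?_⟩
  intro x hxmem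
  obtain ⟨hx1, hx2⟩ := hxmem
  have hfx : f xs ≤ f x := hmin ⟨hx1, hx2⟩
  have : f xp ≤ f xs := by
    have := hPle
    rw [hpxp] at this
    linarith
  simp only [Set.mem_setOf_eq]
  linarith
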